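/- Let t ≥ 1 and let n_1, …, n_t be positive integers with n = n_1 + ⋯ + n_t. Let a ≥ 0 and l ≥ 0 be integers with a + l ≤ n, and fix j with 1 ≤ j ≤ t. Then the set Ω_j = {i : a + 1 ≤ i ≤ a + l, ⌈n_j(2a−1)/(2n)⌉ < ⌈n_j(2i−1)/(2n)⌉ < ⌈n_j(2i+1)/(2n)⌉} has cardinality at most ⌈n_j(l+1)/n⌉ − 1. -/

import Mathlib

/-- Per-coordinate bound from the proof of Lemma 1: the set
`Ω_j = {i : a+1 ≤ i ≤ a+l, ⌈n_j(2a-1)/(2n)⌉ < ⌈n_j(2i-1)/(2n)⌉ < ⌈n_j(2i+1)/(2n)⌉}`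
has cardinality at most `⌈n_j(l+1)/n⌉ - 1`. -/
theorem stmt_1 (t : ℕ) (ht : 1 ≤ t) (nv : Fin t → ℕ) (hnv : ∀ j, 0 < nv j)
    (n : ℕ) (hn : n = ∑ j, nv j)
    (a l : ℕ) (hal : a + l ≤ n) (j : Fin t) :
    (((Finset.Icc (a + 1) (a + l)).filter
      (fun (i : ℕ) =>
        ⌈(nv j : ℚ) * (2 * (a : ℚ) - 1) / (2 * (n : ℚ))⌉ <
          ⌈(nv j : ℚ) * (2 * (i : ℚ) - 1) / (2 * (n : ℚ))⌉ ∧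
        ⌈(nv j : ℚ) * (2 * (i : ℚ) - 1) / (2 * (n : ℚ))⌉ <
          ⌈(nv j : ℚ) * (2 * (i : ℚ) + 1) / (2 * (n : ℚ))⌉)).card : ℤ) ≤
      ⌈(nv j : ℚ) * ((l : ℚ) + 1) / (n : ℚ)⌉ - 1 := by
  classical
  have hn0 : 0 < n := by
    rw [hn]; exact Finset.sum_pos (fun k _ => hnv k) ⟨j, Finset.mem_univ j⟩
  have hN0 : (0:ℚ) < (n:ℚ) := by exact_mod_cast hn0
  have hq0 : (0:ℚ) < (nv j : ℚ) := by exact_mod_cast hnv j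
  set g : ℕ → ℤ := fun i => ⌈(nv j : ℚ) * (2*(i:ℚ) - 1) / (2*(n:ℚ))⌉ with hg
  have hgmono : ∀ i i' : ℕ, i ≤ i' → g i ≤ g i' := by
    intro i i' h
    apply Int.ceil_le_ceil
    have hii : (i:ℚ) ≤ (i':ℚ) := by exact_mod_cast h
    gcongr
    all_goals linarith
  have hshift : ∀ i : ℕ, ⌈(nv j : ℚ) * (2*(i:ℚ) + 1) / (2*(n:ℚ))⌉ = g (i+1) := by
    intro i
    simp only [hg]
    congr 1
    push_cast
    ring
  have hceil_sub : ∀ x y : ℚ, ⌈x⌉ - ⌈y⌉ ≤ ⌈x - y⌉ := by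
    intro x y
    have h1 := Int.le_ceil (x - y)
    have h2 := Int.le_ceil y
    have hx : x ≤ ((⌈x - y⌉ + ⌈y⌉ : ℤ) : ℚ) := by push_cast; linarith
    have := Int.ceil_le.mpr hx
    linarith
  set S := (Finset.Icc (a + 1) (a + l)).filter
      (fun (i : ℕ) =>
        ⌈(nv j : ℚ) * (2 * (a : ℚ) - 1) / (2 * (n : ℚ))⌉ <
          ⌈(nv j : ℚ) * (2 * (i : ℚ) - 1) / (2 * (n : ℚ))⌉ ∧
        ⌈(nv j : ℚ) * (2 * (i : ℚ) - 1) / (2 * (n : ℚ))⌉ <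
          ⌈(nv j : ℚ) * (2 * (i : ℚ) + 1) / (2 * (n : ℚ))⌉) with hS
  have hmem : ∀ i, i ∈ S ↔ (a + 1 ≤ i ∧ i ≤ a + l) ∧ g a < g i ∧ g i < g (i+1) := by
    intro i
    rw [hS, Finset.mem_filter, Finset.mem_Icc, hshift i]
  rcases S.eq_empty_or_nonempty with he | hne
  · rw [he]
    simp only [Finset.card_empty, Nat.cast_zero]
    have : (0:ℚ) < (nv j : ℚ) * ((l : ℚ) + 1) / (n : ℚ) := by positivity
    have := Int.ceil_pos.mpr this
    linarith
  · set i₁ := S.max' hne with hi₁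
    have hi₁S : i₁ ∈ S := S.max'_mem hne
    obtain ⟨⟨hi₁a, hi₁l⟩, hgi₁, hgi₁'⟩ := (hmem i₁).mp hi₁S
    -- strict monotonicity of g on S
    have hsm : ∀ i ∈ S, ∀ i' ∈ S, i < i' → g i < g i' := by
      intro i hi i' hi' hlt
      obtain ⟨_, _, h2⟩ := (hmem i).mp hi
      have := hgmono (i+1) i' hlt
      omega
    -- injection into Icc (g a + 1) (g i₁)
    have hcard : S.card ≤ (Finset.Icc (g a + 1) (g i₁)).card := by
      apply Finset.card_le_card_of_injOn g
      · intro i hi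
        obtain ⟨⟨_, _⟩, h1, _⟩ := (hmem i).mp hi
        rw [Finset.mem_coe, Finset.mem_Icc]
        exact ⟨by omega, hgmono i i₁ (S.le_max' i hi)⟩
      · intro i hi i' hi' heq
        by_contra hne'
        rcases Nat.lt_or_ge i i' with h | h
        · exact absurd heq (ne_of_lt (hsm i hi i' hi' h))
        · have : i' < i := by omega
          exact absurd heq.symm (ne_of_lt (hsm i' hi' i hi this))
    have hIcc : ((Finset.Icc (g a + 1) (g i₁)).card : ℤ) = g i₁ - g a := by
      rw [Int.card_Icc]
      have : g i₁ + 1 - (g a + 1) = g i₁ - g a := by ring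
      rw [this]
      rw [Int.toNat_of_nonneg (by omega)]
    have h1 : (S.card : ℤ) ≤ g i₁ - g a := by
      calc (S.card : ℤ) ≤ ((Finset.Icc (g a + 1) (g i₁)).card : ℤ) := by exact_mod_cast hcard
        _ = g i₁ - g a := hIcc
    -- bound g (i₁+1) - g a ≤ ⌈q (l+1)/n⌉
    have h2 : g (i₁+1) - g a ≤ ⌈(nv j : ℚ) * ((l : ℚ) + 1) / (n : ℚ)⌉ := by
      have hsub := hceil_sub ((nv j : ℚ) * (2*((i₁+1:ℕ):ℚ) - 1) / (2*(n:ℚ)))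
        ((nv j : ℚ) * (2*(a:ℚ) - 1) / (2*(n:ℚ)))
      have heqd : (nv j : ℚ) * (2*((i₁+1:ℕ):ℚ) - 1) / (2*(n:ℚ)) -
          (nv j : ℚ) * (2*(a:ℚ) - 1) / (2*(n:ℚ)) =
          (nv j : ℚ) * (((i₁:ℚ) + 1) - (a:ℚ)) / (n:ℚ) := by
        push_cast
        field_simp
        ring
      rw [heqd] at hsub
      have hle : (nv j : ℚ) * (((i₁:ℚ) + 1) - (a:ℚ)) / (n:ℚ) ≤
          (nv j : ℚ) * ((l : ℚ) + 1) / (n : ℚ) := by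
        have : (i₁:ℚ) ≤ (a:ℚ) + (l:ℚ) := by exact_mod_cast hi₁l
        gcongr
        all_goals linarith
      have := Int.ceil_le_ceil hle
      simp only [hg] at hsub ⊢
      omega
    omega
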